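/- Buffer equivalence refines behavioral equivalence on permutations: if P and Q are permutations of {1, …, n} that are buffer equivalent, i.e. B_{P,i} = B_{Q,i} for all 1 ≤ i ≤ n, then they are behaviorally equivalent, i.e. ACK_{P,i} = ACK_{Q,i} for all 1 ≤ i ≤ n. -/
import Mathlib


/-- `ACK A i` is the acknowledgement after the first `i` packets of the 1-indexed
sequence `A`: the least positive integer not among `A 1, …, A i`.
In particular `ACK A 0 = 1`. -/
noncomputable def ACK (A : ℕ → ℕ) (i : ℕ) : ℕ :=
  sInf {k : ℕ | 0 < k ∧ ∀ j, 1 ≤ j → j ≤ i → A j ≠ k}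

/-- `bufSize A i` is the buffer size after the first `i` packets of the 1-indexed
sequence `A`: the number of distinct values among `A 1, …, A i` that are
`≥ ACK A i`. In particular `bufSize A 0 = 0`. -/
noncomputable def bufSize (A : ℕ → ℕ) (i : ℕ) : ℕ :=
  (((Finset.Icc 1 i).image A).filter (fun v => ACK A i ≤ v)).card

/-- `A` (1-indexed) is a permutation of `{1, …, n}`: every integer in `{1, …, n}`
occurs exactly once among `A 1, …, A n`. -/
def IsPermSeq (n : ℕ) (A : ℕ → ℕ) : Prop :=
  Set.BijOn A (Set.Icc 1 n) (Set.Icc 1 n)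

open Classical in
lemma ack_formula (n : ℕ) (A : ℕ → ℕ) (hA : IsPermSeq n A) (i : ℕ) (hi : i ≤ n) :
    ACK A i = i + 1 - bufSize A i := by
  set m := ACK A i with hm
  have hmem : m ∈ {k : ℕ | 0 < k ∧ ∀ j, 1 ≤ j → j ≤ i → A j ≠ k} := by
    apply Nat.sInf_mem
    refine ⟨n + 1, Nat.succ_pos n, fun j hj1 hj2 h => ?_⟩
    have := (hA.mapsTo ⟨hj1, hj2.trans hi⟩).2
    omega
  have hmin : ∀ k, 0 < k → k < m → ∃ j, 1 ≤ j ∧ j ≤ i ∧ A j = k := by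
    intro k hk hkm
    by_contra h
    push_neg at h
    have hkT : k ∈ {k : ℕ | 0 < k ∧ ∀ j, 1 ≤ j → j ≤ i → A j ≠ k} :=
      ⟨hk, fun j hj1 hj2 hne => (h j hj1 hj2) hne⟩
    have hle : ACK A i ≤ k := Nat.sInf_le hkT
    omega
  set S := (Finset.Icc 1 i).image A with hS
  have hcardS : S.card = i := by
    rw [hS, Finset.card_image_of_injOn, Nat.card_Icc]
    · omega
    · intro a ha b hb hab
      exact hA.injOn ⟨(Finset.mem_Icc.mp ha).1, (Finset.mem_Icc.mp ha).2.trans hi⟩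
        ⟨(Finset.mem_Icc.mp hb).1, (Finset.mem_Icc.mp hb).2.trans hi⟩ hab
  have hfilt : S.filter (fun v => ¬ m ≤ v) = Finset.Icc 1 (m - 1) := by
    ext k
    simp only [Finset.mem_filter, Finset.mem_Icc, hS, Finset.mem_image, not_le]
    constructor
    · rintro ⟨⟨j, hj, rfl⟩, hk⟩
      have := (hA.mapsTo ⟨hj.1, hj.2.trans hi⟩).1
      omega
    · rintro ⟨h1, h2⟩
      have hm1 : 1 ≤ m := hmem.1
      obtain ⟨j, hj1, hj2, hj3⟩ := hmin k h1 (by omega)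
      exact ⟨⟨j, ⟨hj1, hj2⟩, hj3⟩, by omega⟩
  have hsplit := Finset.card_filter_add_card_filter_not
    (s := S) (p := fun v => m ≤ v)
  rw [hfilt, hcardS, Nat.card_Icc] at hsplit
  have hle : m - 1 ≤ i := by omega
  have hm1 : 1 ≤ m := hmem.1
  have hbuf : bufSize A i = (S.filter (fun v => m ≤ v)).card := rfl
  omega

/-- Buffer equivalence refines behavioral equivalence on permutations: if `P` and
`Q` are permutations of `{1, …, n}` with identical buffer sequences, then they
have identical acknowledgement sequences. -/
theorem buffer_equiv_refines_behavioral (n : ℕ) (P Q : ℕ → ℕ)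
    (hP : IsPermSeq n P) (hQ : IsPermSeq n Q)
    (hbuf : ∀ i, 1 ≤ i → i ≤ n → bufSize P i = bufSize Q i) :
    ∀ i, 1 ≤ i → i ≤ n → ACK P i = ACK Q i := by
  intro i h1 h2
  rw [ack_formula n P hP i h2, ack_formula n Q hQ i h2, hbuf i h1 h2]
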